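/- For the linearly constrained problem (K = {0}, so the dual is unconstrained), the hybrid scheme that runs k iterations of Algorithm (DFG) followed by gradient ascent steps satisfies improved O(1/k^{3/2}) bounds in the last primal iterate: for all k ≥ 1, ‖G u^{2k} + g‖ ≤ 2 L_d R_d / (k+1)^{3/2} and |f(u^{2k}) − f*| ≤ (2 R_d + ‖x^0‖) · 2 L_d R_d / (k+1)^{3/2}, where u^{2k} = u(x^{2k}). -/

import Mathlib

open scoped RealInnerProductSpace
set_option maxHeartbeats 1000000

private lemma keyD (Ld σf gn r D : ℝ) (hσf : 0 < σf) (h : Ld * σf = gn^2) :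
    -(Ld/2)*r^2 ≤ σf/2*D^2 - gn*r*D := by
  nlinarith [sq_nonneg (σf*D - gn*r), hσf, hσf.le]


private lemma sq_le_imp'' {x y : ℝ} (hx : 0 ≤ x) (hy : 0 ≤ y) (h : x^2 ≤ y^2) : x ≤ y := by
  nlinarith

private lemma par_id {m : ℕ} (a c : EuclideanSpace ℝ (Fin m)) :
    ⟪a, c⟫ - ‖a‖^2/2 = ‖c‖^2/2 - ‖c - a‖^2/2 := by
  have h := norm_sub_sq_real c a
  have h2 := real_inner_comm a c
  linarith

private lemma theta_facts (θ : ℕ → ℝ) (hθ1 : θ 1 = 1)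
    (hθrec : ∀ k, 1 ≤ k → θ (k + 1) = (1 + Real.sqrt (1 + 4 * θ k ^ 2)) / 2) :
    ∀ j : ℕ, 1 ≤ j → ((j:ℝ)+1)/2 ≤ θ j := by
  intro j hj
  induction j, hj using Nat.le_induction with
  | base => rw [hθ1]; norm_num
  | succ j hj ih =>
    have hj1 : (1:ℝ) ≤ (j:ℝ) := by exact_mod_cast hj
    have hθj : 0 ≤ θ j := by linarith
    have hs : 2 * θ j ≤ Real.sqrt (1 + 4 * θ j ^ 2) := by
      have h4 : (2 * θ j)^2 ≤ 1 + 4 * θ j ^ 2 := by nlinarith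
      calc 2 * θ j = Real.sqrt ((2 * θ j)^2) := (Real.sqrt_sq (by linarith)).symm
        _ ≤ _ := Real.sqrt_le_sqrt h4
    rw [hθrec j hj]
    push_cast
    linarith

private lemma theta_id (θ : ℕ → ℝ)
    (hθrec : ∀ k, 1 ≤ k → θ (k + 1) = (1 + Real.sqrt (1 + 4 * θ k ^ 2)) / 2) :
    ∀ j, 1 ≤ j → θ (j+1)^2 - θ (j+1) = θ j ^ 2 := by
  intro j hj
  have h0 : (0:ℝ) ≤ 1 + 4 * θ j ^ 2 := by positivity
  have hs := Real.sq_sqrt h0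
  rw [hθrec j hj]
  linear_combination hs / 4

private lemma fista_main {p : ℕ} (k : ℕ) (hk : 1 ≤ k)
    (d F : EuclideanSpace ℝ (Fin p) → ℝ)
    (S : EuclideanSpace ℝ (Fin p) → EuclideanSpace ℝ (Fin p))
    (x y : ℕ → EuclideanSpace ℝ (Fin p)) (θ : ℕ → ℝ) (Ld fstar Rd : ℝ)
    (xstar : EuclideanSpace ℝ (Fin p))
    (hLd0 : 0 < Ld)
    (hA : ∀ a b, d b ≤ d a + ⟪S a, b - a⟫)
    (hK : ∀ a z, d z - Ld * ⟪(1/Ld) • S a, z - a⟫ + Ld/2 * ‖(1/Ld) • S a‖^2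
      ≤ d (a + (1/Ld) • S a))
    (hP : ∀ a, d a + ‖S a‖^2/(2*Ld) ≤ d (a + (1/Ld) • S a))
    (hNE : ∀ a b, ‖(a + (1/Ld) • S a) - (b + (1/Ld) • S b)‖ ≤ ‖a - b‖)
    (hGM : ∀ a, ‖S (a + (1/Ld) • S a)‖ ≤ ‖S a‖)
    (hW : ∀ z, d z ≤ fstar)
    (hdf : ∀ z, d z = F z + ⟪z, S z⟫)
    (hdxstar : d xstar = fstar)
    (hθ1 : θ 1 = 1)
    (hθrec : ∀ j, 1 ≤ j → θ (j + 1) = (1 + Real.sqrt (1 + 4 * θ j ^ 2)) / 2)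
    (hy1 : y 1 = x 0)
    (hDFGx : ∀ j, 1 ≤ j → j ≤ k → x j = y j + (1/Ld) • S (y j))
    (hDFGy : ∀ j, 1 ≤ j → j < k →
      y (j + 1) = x j + ((θ j - 1) / θ (j + 1)) • (x j - x (j - 1)))
    (hDG : ∀ j, k ≤ j → j ≤ 2 * k → x (j + 1) = x j + (1/Ld) • S (x j))
    (hRd : Rd = ‖x 0 - xstar‖) :
    ‖S (x (2*k))‖ ≤ 2*Ld*Rd/(((k:ℝ)+1) ^ ((3:ℝ)/2)) ∧
    |F (x (2*k)) - fstar| ≤ (2*Rd + ‖x 0‖) * (2*Ld*Rd/(((k:ℝ)+1) ^ ((3:ℝ)/2))) := by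
  have hRd0 : 0 ≤ Rd := by rw [hRd]; exact norm_nonneg _
  have hθge := theta_facts θ hθ1 hθrec
  have hθ1le : ∀ j : ℕ, 1 ≤ j → (1:ℝ) ≤ θ j := by
    intro j hj
    have h := hθge j hj
    have hj1 : (1:ℝ) ≤ (j:ℝ) := by exact_mod_cast hj
    linarith
  have hid := theta_id θ hθrec
  -- main FISTA estimate
  have hmain : ∀ j : ℕ, 1 ≤ j → j ≤ k →
      (θ j)^2 * (fstar - d (x j)) + Ld/2 * ‖θ j • x j - (θ j - 1) • x (j-1) - xstar‖^2
        ≤ Ld/2 * Rd^2 ∧ ‖x j - xstar‖ ≤ Rd := by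
    intro j hj
    induction j, hj using Nat.le_induction with
    | base =>
      intro _
      have hx1 : x 1 = y 1 + (1/Ld) • S (y 1) := hDFGx 1 le_rfl hk
      have hK1 := hK (y 1) xstar
      rw [← hx1] at hK1
      have hw : x 1 - x 0 = (1/Ld) • S (y 1) := by
        rw [hx1, hy1]; exact add_sub_cancel_left _ _
      rw [← hw, hy1, hdxstar] at hK1
      have hpar := par_id (x 1 - x 0) (xstar - x 0)
      have hca : (xstar - x 0) - (x 1 - x 0) = xstar - x 1 := by abel
      have hn1 : ‖xstar - x 0‖^2 = Rd^2 := by rw [norm_sub_rev, hRd]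
      have hn2 : ‖xstar - x 1‖^2 = ‖x 1 - xstar‖^2 := by rw [norm_sub_rev]
      rw [hca, hn1, hn2] at hpar
      have hpar' : Ld * (⟪x 1 - x 0, xstar - x 0⟫ - ‖x 1 - x 0‖^2/2)
          = Ld * (Rd^2/2 - ‖x 1 - xstar‖^2/2) := by rw [hpar]
      have hU1 : θ 1 • x 1 - (θ 1 - 1) • x (1-1) - xstar = x 1 - xstar := by
        rw [hθ1]; module
      have hEn : (θ 1)^2 * (fstar - d (x 1))
          + Ld/2 * ‖θ 1 • x 1 - (θ 1 - 1) • x (1-1) - xstar‖^2 ≤ Ld/2 * Rd^2 := by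
        rw [hU1, hθ1]
        linarith [hK1, hpar']
      refine ⟨hEn, ?_⟩
      have hv1 : 0 ≤ fstar - d (x 1) := by linarith [hW (x 1)]
      rw [hU1, hθ1] at hEn
      have hsq : ‖x 1 - xstar‖^2 ≤ Rd^2 := by nlinarith [hEn, hv1, hLd0]
      exact sq_le_imp'' (norm_nonneg _) hRd0 hsq
    | succ j hj ih =>
      intro hjk
      have hjk' : j ≤ k := by omega
      have hjlt : j < k := by omega
      obtain ⟨ihE, ihX⟩ := ih hjk'
      have ht1 : (1:ℝ) ≤ θ (j+1) := hθ1le (j+1) (by omega)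
      have ht0 : θ (j+1) ≠ 0 := by intro h; rw [h] at ht1; linarith
      have hidj : θ (j+1)^2 - θ (j+1) = θ j^2 := hid j hj
      have hyrec := hDFGy j hj hjlt
      have hxrec : x (j+1) = y (j+1) + (1/Ld) • S (y (j+1)) := hDFGx (j+1) (by omega) hjk
      have hAw : x (j+1) - y (j+1) = (1/Ld) • S (y (j+1)) := by
        rw [hxrec]; exact add_sub_cancel_left _ _
      have I1 := hK (y (j+1)) (x j)
      have I2 := hK (y (j+1)) xstar
      rw [← hxrec, ← hAw] at I1 I2
      rw [hdxstar] at I2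
      have hty : θ (j+1) • y (j+1) = θ (j+1) • x j + (θ j - 1) • (x j - x (j-1)) := by
        rw [hyrec]; match_scalars <;> (field_simp; try ring)
      have hcvec : (θ (j+1) - 1) • x j + xstar - θ (j+1) • y (j+1)
          = -(θ j • x j - (θ j - 1) • x (j-1) - xstar) := by
        rw [hty]; module
      have hc2 : ((θ (j+1) - 1) • x j + xstar - θ (j+1) • y (j+1))
            - θ (j+1) • (x (j+1) - y (j+1))
          = -(θ (j+1) • x (j+1) - (θ (j+1) - 1) • x j - xstar) := by
        module
      have hC' : (θ (j+1) - 1) • x j + xstar - θ (j+1) • y (j+1)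
          = (θ (j+1) - 1) • (x j - y (j+1)) + (xstar - y (j+1)) := by module
      have hsplit : ⟪θ (j+1) • (x (j+1) - y (j+1)),
            (θ (j+1) - 1) • x j + xstar - θ (j+1) • y (j+1)⟫
          = θ (j+1) * ((θ (j+1) - 1) * ⟪x (j+1) - y (j+1), x j - y (j+1)⟫
            + ⟪x (j+1) - y (j+1), xstar - y (j+1)⟫) := by
        rw [hC', real_inner_smul_left, inner_add_right, real_inner_smul_right]; try ring
      have hnormtA : ‖θ (j+1) • (x (j+1) - y (j+1))‖^2
          = θ (j+1)^2 * ‖x (j+1) - y (j+1)‖^2 := by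
        rw [norm_smul, Real.norm_eq_abs, abs_of_nonneg (by linarith), mul_pow]
      have hpar := par_id (θ (j+1) • (x (j+1) - y (j+1)))
        ((θ (j+1) - 1) • x j + xstar - θ (j+1) • y (j+1))
      rw [hsplit, hnormtA, hc2, hcvec, norm_neg, norm_neg] at hpar
      have hpar2 : Ld * (θ (j+1) * ((θ (j+1) - 1) * ⟪x (j+1) - y (j+1), x j - y (j+1)⟫
            + ⟪x (j+1) - y (j+1), xstar - y (j+1)⟫)
            - θ (j+1)^2 * ‖x (j+1) - y (j+1)‖^2/2)
          = Ld * (‖θ j • x j - (θ j - 1) • x (j-1) - xstar‖^2/2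
            - ‖θ (j+1) • x (j+1) - (θ (j+1) - 1) • x j - xstar‖^2/2) := by rw [hpar]
      have httm : (0:ℝ) ≤ θ (j+1) * (θ (j+1) - 1) := by nlinarith
      have f1 := mul_le_mul_of_nonneg_left I1 httm
      have f2 := mul_le_mul_of_nonneg_left I2 (by linarith : (0:ℝ) ≤ θ (j+1))
      have IH' : (θ (j+1)^2 - θ (j+1)) * (fstar - d (x j))
          + Ld/2 * ‖θ j • x j - (θ j - 1) • x (j-1) - xstar‖^2 ≤ Ld/2 * Rd^2 := by
        rw [hidj]; exact ihE
      simp only [Nat.add_sub_cancel]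
      have hEn : θ (j+1)^2 * (fstar - d (x (j+1)))
          + Ld/2 * ‖θ (j+1) • x (j+1) - (θ (j+1) - 1) • x j - xstar‖^2 ≤ Ld/2 * Rd^2 := by
        linarith [f1, f2, IH', hpar2]
      refine ⟨hEn, ?_⟩
      have hv1 : 0 ≤ fstar - d (x (j+1)) := by linarith [hW (x (j+1))]
      have hUb : ‖θ (j+1) • x (j+1) - (θ (j+1) - 1) • x j - xstar‖ ≤ Rd := by
        have hsq : ‖θ (j+1) • x (j+1) - (θ (j+1) - 1) • x j - xstar‖^2 ≤ Rd^2 := by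
          nlinarith [hEn, hv1, hLd0, sq_nonneg (θ (j+1))]
        exact sq_le_imp'' (norm_nonneg _) hRd0 hsq
      have hxx : x (j+1) - xstar = (1 - 1/θ (j+1)) • (x j - xstar)
          + (1/θ (j+1)) • (θ (j+1) • x (j+1) - (θ (j+1) - 1) • x j - xstar) := by
        match_scalars <;> (field_simp; try ring)
      have h1t : (0:ℝ) ≤ 1 - 1/θ (j+1) := by
        have : 1/θ (j+1) ≤ 1 := by
          rw [div_le_one (by linarith)]; linarith
        linarith
      have h2t : (0:ℝ) ≤ 1/θ (j+1) := by positivity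
      calc ‖x (j+1) - xstar‖
          ≤ ‖(1 - 1/θ (j+1)) • (x j - xstar)‖
            + ‖(1/θ (j+1)) • (θ (j+1) • x (j+1) - (θ (j+1) - 1) • x j - xstar)‖ := by
            rw [hxx]; exact norm_add_le _ _
        _ = (1 - 1/θ (j+1)) * ‖x j - xstar‖
            + (1/θ (j+1)) * ‖θ (j+1) • x (j+1) - (θ (j+1) - 1) • x j - xstar‖ := by
            rw [norm_smul, norm_smul, Real.norm_eq_abs, Real.norm_eq_abs,
              abs_of_nonneg h1t, abs_of_nonneg h2t]
        _ ≤ (1 - 1/θ (j+1)) * Rd + (1/θ (j+1)) * Rd := by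
            gcongr
        _ = Rd := by ring
  obtain ⟨hEk, hxk⟩ := hmain k hk le_rfl
  have hvk0 : 0 ≤ fstar - d (x k) := by linarith [hW (x k)]
  have hθk := hθge k hk
  have hck : (0:ℝ) ≤ (k:ℝ)+1 := by positivity
  have hvkm : (fstar - d (x k)) * ((k:ℝ)+1)^2 ≤ 2*Ld*Rd^2 := by
    have hnn : 0 ≤ Ld/2*‖θ k • x k - (θ k - 1) • x (k-1) - xstar‖^2 := by positivity
    have hc2 : ((k:ℝ)+1)^2 ≤ 4 * θ k^2 := by nlinarith [hθk, hck]
    have hmul := mul_le_mul_of_nonneg_left hc2 hvk0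
    linarith [hmul, hEk, hnn]
  -- S vanishes at the dual optimum
  have hSstar : S xstar = 0 := by
    have h1 := hP xstar
    have h2 := hW (xstar + (1/Ld) • S xstar)
    have h3 : ‖S xstar‖^2/(2*Ld) ≤ 0 := by linarith [hdxstar]
    have h4 : ‖S xstar‖^2 ≤ 0 := by
      have h5 := mul_le_mul_of_nonneg_left h3 (by positivity : (0:ℝ) ≤ 2*Ld)
      have e : 2*Ld*(‖S xstar‖^2/(2*Ld)) = ‖S xstar‖^2 := by field_simp
      linarith [h5, e]
    have h5 : ‖S xstar‖ = 0 := by nlinarith [norm_nonneg (S xstar)]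
    exact norm_eq_zero.mp h5
  have hTst : xstar + (1/Ld) • S xstar = xstar := by rw [hSstar, smul_zero, add_zero]
  -- distances stay bounded in the gradient phase
  have hdist : ∀ m : ℕ, k ≤ m → m ≤ 2*k → ‖x m - xstar‖ ≤ Rd := by
    intro m hm
    induction m, hm using Nat.le_induction with
    | base => intro _; exact hxk
    | succ m hm ihm =>
      intro h2
      have hm2 : m ≤ 2*k := by omega
      have hv : x (m+1) - xstar = (x m + (1/Ld) • S (x m)) - (xstar + (1/Ld) • S xstar) := by
        rw [hDG m hm hm2, hTst]
      rw [hv]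
      exact (hNE _ _).trans (ihm hm2)
  -- gradient norms decrease
  have hdec2 : ∀ i, k ≤ i → i ≤ 2*k → ‖S (x (i+1))‖ ≤ ‖S (x i)‖ := by
    intro i h1 h2; rw [hDG i h1 h2]; exact hGM (x i)
  have hanti : ∀ i, k ≤ i → i ≤ 2*k → ‖S (x (2*k))‖ ≤ ‖S (x i)‖ := by
    intro i h1 h2
    have haux : ∀ m : ℕ, i ≤ m → m ≤ 2*k → ‖S (x m)‖ ≤ ‖S (x i)‖ := by
      intro m hm
      induction m, hm using Nat.le_induction with
      | base => intro _; exact le_rfl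
      | succ m hm ihm =>
        intro h3
        exact (hdec2 m (le_trans h1 hm) (by omega)).trans (ihm (by omega))
    exact haux (2*k) h2 le_rfl
  have hprog : ∀ m, k ≤ m → m ≤ 2*k → d (x m) + ‖S (x m)‖^2/(2*Ld) ≤ d (x (m+1)) := by
    intro m h1 h2; rw [hDG m h1 h2]; exact hP (x m)
  have hL2 : (0:ℝ) < 2*Ld := by positivity
  have htel : ∀ i : ℕ, i ≤ k+1 →
      d (x k) + (i:ℝ) * (‖S (x (2*k))‖^2/(2*Ld)) ≤ d (x (k+i)) := by
    intro i
    induction i with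
    | zero => intro _; simp
    | succ i ihi =>
      intro hik
      have hik' : i ≤ k := by omega
      have h1 := hprog (k+i) (by omega) (by omega)
      have h2 := hanti (k+i) (by omega) (by omega)
      have h3 : ‖S (x (2*k))‖^2 ≤ ‖S (x (k+i))‖^2 := by
        nlinarith [norm_nonneg (S (x (2*k)))]
      have h4 := ihi (by omega)
      have h5 : ‖S (x (2*k))‖^2/(2*Ld) ≤ ‖S (x (k+i))‖^2/(2*Ld) := by gcongr
      have he : k + (i+1) = (k+i)+1 := rfl
      rw [he]
      push_cast
      linarith [h1, h4, h5]
  have hfin1 : d (x k) + ((k:ℝ)+1) * (‖S (x (2*k))‖^2/(2*Ld)) ≤ d (x (2*k+1)) := by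
    have h := htel (k+1) le_rfl
    rw [show k + (k+1) = 2*k+1 by omega] at h
    push_cast at h
    exact h
  have hNsq : ((k:ℝ)+1) * ‖S (x (2*k))‖^2 ≤ 2*Ld*(fstar - d (x k)) := by
    have hw2k := hW (x (2*k+1))
    have h1 : ((k:ℝ)+1) * (‖S (x (2*k))‖^2/(2*Ld)) ≤ fstar - d (x k) := by linarith
    have h2 := mul_le_mul_of_nonneg_left h1 hL2.le
    have e : 2*Ld*(((k:ℝ)+1) * (‖S (x (2*k))‖^2/(2*Ld))) = ((k:ℝ)+1) * ‖S (x (2*k))‖^2 := by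
      field_simp
      try ring
    linarith [h2, e]
  have hc0 : (0:ℝ) < (k:ℝ)+1 := by positivity
  have hkey : ‖S (x (2*k))‖^2 * ((k:ℝ)+1)^3 ≤ 4*Ld^2*Rd^2 := by
    have h1 := mul_le_mul_of_nonneg_right hNsq (sq_nonneg ((k:ℝ)+1))
    have h2 := mul_le_mul_of_nonneg_left hvkm hL2.le
    nlinarith [h1, h2]
  have hrpow : (((k:ℝ)+1) ^ ((3:ℝ)/2))^2 = ((k:ℝ)+1)^3 := by
    rw [← Real.rpow_natCast (((k:ℝ)+1) ^ ((3:ℝ)/2)) 2, ← Real.rpow_mul hc0.le]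
    rw [show ((3:ℝ)/2)*((2:ℕ):ℝ) = ((3:ℕ):ℝ) by norm_num, Real.rpow_natCast]
  have hrp0 : (0:ℝ) < ((k:ℝ)+1) ^ ((3:ℝ)/2) := Real.rpow_pos_of_pos hc0 _
  have hgoal1 : ‖S (x (2*k))‖ ≤ 2*Ld*Rd/(((k:ℝ)+1) ^ ((3:ℝ)/2)) := by
    apply sq_le_imp'' (norm_nonneg _) (by positivity)
    rw [div_pow, hrpow]
    rw [le_div_iff₀ (by positivity : (0:ℝ) < ((k:ℝ)+1)^3)]
    nlinarith [hkey]
  refine ⟨hgoal1, ?_⟩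
  -- objective bound
  have hε0 : (0:ℝ) ≤ 2*Ld*Rd/(((k:ℝ)+1) ^ ((3:ℝ)/2)) := by positivity
  have hdX := hdf (x (2*k))
  have hdist2k : ‖x (2*k) - xstar‖ ≤ Rd := hdist (2*k) (by omega) le_rfl
  have e1 : ‖x (2*k)‖ ≤ ‖x (2*k) - xstar‖ + ‖xstar‖ := by
    calc ‖x (2*k)‖ = ‖(x (2*k) - xstar) + xstar‖ := by rw [sub_add_cancel]
    _ ≤ _ := norm_add_le _ _
  have e2 : ‖xstar‖ ≤ ‖xstar - x 0‖ + ‖x 0‖ := by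
    calc ‖xstar‖ = ‖(xstar - x 0) + x 0‖ := by rw [sub_add_cancel]
    _ ≤ _ := norm_add_le _ _
  have e3 : ‖xstar - x 0‖ = Rd := by rw [norm_sub_rev, hRd]
  have hnX : ‖x (2*k)‖ ≤ 2*Rd + ‖x 0‖ := by linarith [e1, e2, e3, hdist2k]
  have hxs : ‖xstar‖ ≤ Rd + ‖x 0‖ := by linarith [e2, e3]
  have hup : F (x (2*k)) - fstar ≤ (2*Rd + ‖x 0‖) * (2*Ld*Rd/(((k:ℝ)+1) ^ ((3:ℝ)/2))) := by
    have h1 := hW (x (2*k))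
    have h2 : |⟪x (2*k), S (x (2*k))⟫| ≤ ‖x (2*k)‖ * ‖S (x (2*k))‖ :=
      abs_real_inner_le_norm _ _
    have hmm : ‖x (2*k)‖ * ‖S (x (2*k))‖
        ≤ (2*Rd + ‖x 0‖) * (2*Ld*Rd/(((k:ℝ)+1) ^ ((3:ℝ)/2))) :=
      mul_le_mul hnX hgoal1 (norm_nonneg _) (by linarith [norm_nonneg (x 0)])
    have h3 := neg_abs_le ⟪x (2*k), S (x (2*k))⟫
    linarith [h1, hdX, h3, h2, hmm]
  have hlow : fstar - F (x (2*k)) ≤ (2*Rd + ‖x 0‖) * (2*Ld*Rd/(((k:ℝ)+1) ^ ((3:ℝ)/2))) := by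
    have h2 := hA (x (2*k)) xstar
    rw [hdxstar] at h2
    have h3 : ⟪S (x (2*k)), xstar - x (2*k)⟫
        = ⟪S (x (2*k)), xstar⟫ - ⟪S (x (2*k)), x (2*k)⟫ := inner_sub_right _ _ _
    have h4 : ⟪x (2*k), S (x (2*k))⟫ = ⟪S (x (2*k)), x (2*k)⟫ := real_inner_comm _ _
    have h5 : |⟪S (x (2*k)), xstar⟫| ≤ ‖S (x (2*k))‖ * ‖xstar‖ := abs_real_inner_le_norm _ _
    have hmm2 : ‖S (x (2*k))‖ * ‖xstar‖
        ≤ (2*Ld*Rd/(((k:ℝ)+1) ^ ((3:ℝ)/2))) * (2*Rd + ‖x 0‖) :=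
      mul_le_mul hgoal1 (hxs.trans (by linarith)) (norm_nonneg _) hε0
    have h6 := le_abs_self ⟪S (x (2*k)), xstar⟫
    linarith [h2, h3, h4, h5, hmm2, h6, hdX]
  rw [abs_le]
  constructor <;> linarith [hup, hlow]

theorem stmt_19 {n p : ℕ}
    (f : EuclideanSpace ℝ (Fin n) → ℝ) (σf : ℝ) (hσf : 0 < σf)
    (hfc : Continuous f) (hfsc : StrongConvexOn Set.univ σf f)
    (U : Set (EuclideanSpace ℝ (Fin n))) (hUne : U.Nonempty) (hUcl : IsClosed U) (hUcv : Convex ℝ U)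
    (G : EuclideanSpace ℝ (Fin n) →L[ℝ] EuclideanSpace ℝ (Fin p)) (hG : G ≠ 0) (g : EuclideanSpace ℝ (Fin p))
    (Lag : EuclideanSpace ℝ (Fin n) → EuclideanSpace ℝ (Fin p) → ℝ)
    (hLag : ∀ u x, Lag u x = f u + ⟪x, -(G u) - g⟫)
    (uu : EuclideanSpace ℝ (Fin p) → EuclideanSpace ℝ (Fin n))
    (huu : ∀ x : EuclideanSpace ℝ (Fin p), uu x ∈ U ∧ ∀ u ∈ U, Lag (uu x) x ≤ Lag u x)
    (d : EuclideanSpace ℝ (Fin p) → ℝ) (hd : ∀ x, d x = Lag (uu x) x)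
    (ustar : EuclideanSpace ℝ (Fin n))
    (hustar : ustar ∈ U ∧ G ustar + g = 0 ∧ ∀ u ∈ U, G u + g = 0 → f ustar ≤ f u)
    (fstar : ℝ) (hfstar : fstar = f ustar)
    (Xstar : Set (EuclideanSpace ℝ (Fin p))) (hXstar : Xstar = {x : EuclideanSpace ℝ (Fin p) | d x = fstar})
    (hXne : Xstar.Nonempty)
    (Ld : ℝ) (hLd : Ld = ‖G‖ ^ 2 / σf)
    (θ : ℕ → ℝ) (hθ0 : θ 0 = 0) (hθ1 : θ 1 = 1)
    (hθrec : ∀ k, 1 ≤ k → θ (k + 1) = (1 + Real.sqrt (1 + 4 * θ k ^ 2)) / 2)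
    (k : ℕ) (hk : 1 ≤ k) (x y : ℕ → EuclideanSpace ℝ (Fin p)) (hy1 : y 1 = x 0)
    (hDFGx : ∀ j, 1 ≤ j → j ≤ k →
      x j = y j + (1 / Ld) • (-(G (uu (y j))) - g))
    (hDFGy : ∀ j, 1 ≤ j → j < k →
      y (j + 1) = x j + ((θ j - 1) / θ (j + 1)) • (x j - x (j - 1)))
    (hDG : ∀ j, k ≤ j → j ≤ 2 * k →
      x (j + 1) = x j + (1 / Ld) • (-(G (uu (x j))) - g))
    (xstar : EuclideanSpace ℝ (Fin p)) (hxstar : xstar ∈ Xstar)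
    (hxstarmin : ∀ z ∈ Xstar, ‖x 0 - xstar‖ ≤ ‖x 0 - z‖)
    (Rd : ℝ) (hRd : Rd = ‖x 0 - xstar‖)
 :
    ‖G (uu (x (2 * k))) + g‖ ≤ 2 * Ld * Rd / ((k : ℝ) + 1) ^ ((3 : ℝ) / 2) ∧
    |f (uu (x (2 * k))) - fstar| ≤
      (2 * Rd + ‖x 0‖) * (2 * Ld * Rd / ((k : ℝ) + 1) ^ ((3 : ℝ) / 2)) := by
  have hGpos : (0:ℝ) < ‖G‖ := by
    simpa [norm_pos_iff] using hG
  have hLd0 : 0 < Ld := by rw [hLd]; positivity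
  have hLdσ : Ld * σf = ‖G‖^2 := by rw [hLd]; field_simp
  obtain ⟨S, hSa⟩ : ∃ S : EuclideanSpace ℝ (Fin p) → EuclideanSpace ℝ (Fin p),
      ∀ a, S a = -(G (uu a)) - g := ⟨_, fun _ => rfl⟩
  have hdf : ∀ z, d z = f (uu z) + ⟪z, S z⟫ := fun z => by rw [hd, hLag, hSa]
  -- (A) supergradient inequality
  have hA : ∀ a b, d b ≤ d a + ⟪S a, b - a⟫ := by
    intro a b
    have h1 : d b ≤ Lag (uu a) b := by rw [hd]; exact (huu b).2 (uu a) (huu a).1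
    have h2 : Lag (uu a) b = f (uu a) + ⟪b, S a⟫ := by rw [hLag, hSa]
    have h3 : d a = f (uu a) + ⟪a, S a⟫ := hdf a
    have h4 : ⟪b - a, S a⟫ = ⟪b, S a⟫ - ⟪a, S a⟫ := inner_sub_left b a (S a)
    have h5 : ⟪S a, b - a⟫ = ⟪b - a, S a⟫ := real_inner_comm _ _
    linarith
  -- (B) quadratic growth
  have hB : ∀ a, ∀ u ∈ U, Lag (uu a) a + σf/2 * ‖u - uu a‖^2 ≤ Lag u a := by
    intro a u huU
    obtain ⟨hwU, hwmin⟩ := huu a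
    have key : ∀ t : ℝ, 0 < t → t ≤ 1 →
        Lag (uu a) a + (1 - t) * (σf/2 * ‖u - uu a‖^2) ≤ Lag u a := by
      intro t ht0 ht1
      have h1t : (0:ℝ) ≤ 1 - t := by linarith
      have hmem : (1-t) • (uu a) + t • u ∈ U := hUcv hwU huU h1t ht0.le (by ring)
      have hf := hfsc.2 (Set.mem_univ (uu a)) (Set.mem_univ u) h1t ht0.le (by ring)
      have hlin : ⟪a, -(G ((1-t) • uu a + t • u)) - g⟫
          = (1-t) * ⟪a, -(G (uu a)) - g⟫ + t * ⟪a, -(G u) - g⟫ := by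
        have hvec : -(G ((1-t) • uu a + t • u)) - g
            = (1-t) • (-(G (uu a)) - g) + t • (-(G u) - g) := by
          rw [map_add, map_smul, map_smul]; module
        rw [hvec, inner_add_right, real_inner_smul_right, real_inner_smul_right]
      have hmin' := hwmin _ hmem
      set c := σf/2 * ‖u - uu a‖^2 with hc
      have hcc : σf/2 * ‖uu a - u‖^2 = c := by rw [hc, norm_sub_rev]
      have e1 := hLag ((1-t) • uu a + t • u) a
      have e2 := hLag (uu a) a
      have e3 := hLag u a
      have hf' : f ((1-t) • uu a + t • u) ≤ (1-t) * f (uu a) + t * f u - (1-t)*t*c := by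
        simpa [smul_eq_mul, hcc] using hf
      have hchain : Lag (uu a) a ≤ (1-t) * Lag (uu a) a + t * Lag u a - (1-t)*t*c := by
        calc Lag (uu a) a ≤ Lag ((1-t) • uu a + t • u) a := hmin'
        _ = f ((1-t) • uu a + t • u) + ⟪ a, -(G ((1-t) • uu a + t • u)) - g ⟫ := e1
        _ ≤ ((1-t) * f (uu a) + t * f u - (1-t)*t*c)
            + ((1-t) * ⟪ a, -(G (uu a)) - g ⟫ + t * ⟪ a, -(G u) - g ⟫) := by
          rw [hlin]
          linarith [hf']
        _ = (1-t) * Lag (uu a) a + t * Lag u a - (1-t)*t*c := by rw [e2, e3]; ring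
      have hmul : t * (Lag (uu a) a + (1-t)*c) ≤ t * (Lag u a) := by
        linarith [hchain]
      have hfin := le_of_mul_le_mul_left hmul ht0
      linarith [hfin]
    have hlim : Filter.Tendsto
        (fun nn : ℕ => Lag (uu a) a + (1 - 1/((nn:ℝ)+1)) * (σf/2 * ‖u - uu a‖^2))
        Filter.atTop (nhds (Lag (uu a) a + (1 - 0) * (σf/2 * ‖u - uu a‖^2))) :=
      Filter.Tendsto.const_add _ ((Filter.Tendsto.const_sub _ tendsto_one_div_add_atTop_nhds_zero_nat).mul_const _)
    have hle : Lag (uu a) a + (1 - 0) * (σf/2 * ‖u - uu a‖^2) ≤ Lag u a := by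
      refine le_of_tendsto hlim (Filter.Eventually.of_forall fun nn => ?_)
      have h1 : (0:ℝ) < 1/((nn:ℝ)+1) := by positivity
      have h2 : 1/((nn:ℝ)+1) ≤ 1 := by
        rw [div_le_one (by positivity)]
        have : (0:ℝ) ≤ (nn:ℝ) := Nat.cast_nonneg nn
        linarith
      exact key _ h1 h2
    linarith [hle]
  -- weak duality
  have hW : ∀ z, d z ≤ fstar := by
    intro z
    have h1 : d z ≤ Lag ustar z := by rw [hd]; exact (huu z).2 ustar hustar.1
    have h2 : -(G ustar) - g = 0 := by
      have h := hustar.2.1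
      have h3 : -(G ustar) - g = -(G ustar + g) := by abel
      rw [h3, h, neg_zero]
    rw [hLag, h2, inner_zero_right] at h1
    rw [hfstar]
    linarith
  -- descent lemma (D)
  have hD : ∀ a b, d a + ⟪ S a, b - a ⟫ - Ld/2 * ‖b - a‖^2 ≤ d b := by
    intro a b
    have h1 : Lag (uu a) a + σf/2 * ‖uu b - uu a‖^2 ≤ Lag (uu b) a := hB a (uu b) (huu b).1
    have h2 : d b = Lag (uu b) a + ⟪ b - a, S b ⟫ := by
      rw [hd, hLag, hLag, hSa, inner_sub_left]; ring
    have h3 : d a = Lag (uu a) a := hd a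
    have h4 : ⟪ b - a, S b ⟫ = ⟪ b - a, S a ⟫ + ⟪ b - a, S b - S a ⟫ := by
      rw [← inner_add_right]
      congr 1
      abel
    have h5 : S b - S a = G (uu a - uu b) := by
      rw [hSa, hSa, map_sub]; abel
    have h6 : |⟪ b - a, S b - S a ⟫| ≤ ‖b - a‖ * (‖G‖ * ‖uu b - uu a‖) := by
      refine (abs_real_inner_le_norm _ _).trans ?_
      have h7 : ‖S b - S a‖ ≤ ‖G‖ * ‖uu b - uu a‖ := by
        rw [h5]
        rw [show uu a - uu b = -(uu b - uu a) by abel, map_neg, norm_neg]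
        exact G.le_opNorm _
      exact mul_le_mul_of_nonneg_left h7 (norm_nonneg _)
    have h8 : ⟪ S a, b - a ⟫ = ⟪ b - a, S a ⟫ := real_inner_comm _ _
    have h9 := abs_le.1 h6
    have key := keyD Ld σf ‖G‖ ‖b - a‖ ‖uu b - uu a‖ hσf hLdσ
    linarith [h1, h2, h3, h4, h8, h9.1, key]
  -- key per-step lemma (K)
  have hK : ∀ a z, d z - Ld * ⟪ (1/Ld) • S a, z - a ⟫ + Ld/2 * ‖(1/Ld) • S a‖^2
      ≤ d (a + (1/Ld) • S a) := by
    intro a z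
    have h1 := hD a (a + (1/Ld) • S a)
    have hw : (a + (1/Ld) • S a) - a = (1/Ld) • S a := add_sub_cancel_left a _
    rw [hw] at h1
    have h2 : ⟪ S a, (1/Ld) • S a ⟫ = (1/Ld) * ‖S a‖^2 := by
      rw [real_inner_smul_right, real_inner_self_eq_norm_sq]
    have h3 : ‖(1/Ld) • S a‖^2 = (1/Ld)^2 * ‖S a‖^2 := by
      rw [norm_smul, Real.norm_eq_abs, abs_of_nonneg (by positivity : (0:ℝ) ≤ 1/Ld), mul_pow]
    have h4 := hA a z
    have h5 : ⟪ (1/Ld) • S a, z - a ⟫ = (1/Ld) * ⟪ S a, z - a ⟫ := real_inner_smul_left _ _ _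
    have hLdne : Ld ≠ 0 := ne_of_gt hLd0
    have h6 : Ld * ((1/Ld) * ⟪ S a, z - a ⟫) = ⟪ S a, z - a ⟫ := by field_simp
    have h7 : Ld/2 * ((1/Ld)^2 * ‖S a‖^2) = ‖S a‖^2/(2*Ld) := by
      field_simp
    have h8 : (1/Ld) * ‖S a‖^2 - Ld/2 * ((1/Ld)^2 * ‖S a‖^2) = ‖S a‖^2/(2*Ld) := by
      field_simp
      ring
    rw [h5, h3]
    rw [h2, h3] at h1
    linarith [h1, h4, h6, h7, h8]
  -- ascent progress (P)
  have hP : ∀ a, d a + ‖S a‖^2/(2*Ld) ≤ d (a + (1/Ld) • S a) := by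
    intro a
    have h1 := hK a a
    have h2 : ⟪ (1/Ld) • S a, a - a ⟫ = 0 := by simp
    have h3 : ‖(1/Ld) • S a‖^2 = (1/Ld)^2 * ‖S a‖^2 := by
      rw [norm_smul, Real.norm_eq_abs, abs_of_nonneg (by positivity : (0:ℝ) ≤ 1/Ld), mul_pow]
    have h4 : Ld/2 * ((1/Ld)^2 * ‖S a‖^2) = ‖S a‖^2/(2*Ld) := by
      field_simp
    rw [h2, h3] at h1
    linarith
  -- (*) strengthened supergradient inequality
  have hstar : ∀ a b, 2*Ld*(d a - d b - ⟪ S b, a - b ⟫) ≤ -‖S a - S b‖^2 := by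
    intro a b
    have h1 := hD a (a + (1/Ld) • (S a - S b))
    have hw : (a + (1/Ld) • (S a - S b)) - a = (1/Ld) • (S a - S b) := add_sub_cancel_left _ _
    rw [hw] at h1
    have h2 := hA b (a + (1/Ld) • (S a - S b))
    have hv : (a + (1/Ld) • (S a - S b)) - b = (a - b) + (1/Ld) • (S a - S b) := by abel
    rw [hv] at h2
    have i1 : ⟪ S a, (1/Ld) • (S a - S b) ⟫ = (1/Ld) * ⟪ S a, S a - S b ⟫ :=
      real_inner_smul_right _ _ _
    have i2 : ‖(1/Ld) • (S a - S b)‖^2 = (1/Ld)^2 * ‖S a - S b‖^2 := by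
      rw [norm_smul, Real.norm_eq_abs, abs_of_nonneg (by positivity : (0:ℝ) ≤ 1/Ld), mul_pow]
    have i3 : ⟪ S b, (a - b) + (1/Ld) • (S a - S b) ⟫
        = ⟪ S b, a - b ⟫ + (1/Ld) * ⟪ S b, S a - S b ⟫ := by
      rw [inner_add_right, real_inner_smul_right]
    have i4 : ⟪ S a, S a - S b ⟫ - ⟪ S b, S a - S b ⟫ = ‖S a - S b‖^2 := by
      rw [← inner_sub_left, real_inner_self_eq_norm_sq]
    rw [i1, i2] at h1
    rw [i3] at h2
    have eA : Ld/2 * ((1/Ld)^2 * ‖S a - S b‖^2) = ‖S a - S b‖^2/(2*Ld) := by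
      field_simp
    have eB : (1/Ld)*⟪ S b, S a - S b ⟫ - (1/Ld)*⟪ S a, S a - S b ⟫
        = -((1/Ld)*‖S a - S b‖^2) := by linear_combination (-(1/Ld)) * i4
    have hun : d a - d b - ⟪ S b, a - b ⟫
        ≤ -((1/Ld)*‖S a - S b‖^2) + ‖S a - S b‖^2/(2*Ld) := by linarith [h1, h2, eA, eB]
    have hfin := mul_le_mul_of_nonneg_left hun (by positivity : (0:ℝ) ≤ 2*Ld)
    have eD : 2*Ld*(-((1/Ld)*‖S a - S b‖^2) + ‖S a - S b‖^2/(2*Ld)) = -‖S a - S b‖^2 := by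
      field_simp; ring
    linarith [hfin, eD]
  -- co-coercivity
  have hCC : ∀ a b, Ld * ⟪ S a - S b, a - b ⟫ ≤ -‖S a - S b‖^2 := by
    intro a b
    have h1 := hstar a b
    have h2 := hstar b a
    have hnn : ‖S b - S a‖ = ‖S a - S b‖ := norm_sub_rev _ _
    rw [hnn] at h2
    have i5 : ⟪ S a, b - a ⟫ = -⟪ S a, a - b ⟫ := by
      rw [show b - a = -(a-b) by abel, inner_neg_right]
    have i6 : ⟪ S a - S b, a - b ⟫ = ⟪ S a, a - b ⟫ - ⟪ S b, a - b ⟫ := inner_sub_left _ _ _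
    have i5' : Ld * ⟪ S a, b - a ⟫ = -(Ld * ⟪ S a, a - b ⟫) := by rw [i5]; ring
    have i6' : Ld * ⟪ S a - S b, a - b ⟫ = Ld * ⟪ S a, a - b ⟫ - Ld * ⟪ S b, a - b ⟫ := by
      rw [i6]; ring
    linarith [h1, h2, i5', i6']
  -- nonexpansiveness of the ascent step
  have hNE : ∀ a b, ‖(a + (1/Ld) • S a) - (b + (1/Ld) • S b)‖ ≤ ‖a - b‖ := by
    intro a b
    have hv : (a + (1/Ld) • S a) - (b + (1/Ld) • S b) = (a - b) + (1/Ld) • (S a - S b) := by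
      rw [smul_sub]; abel
    rw [hv]
    have h1 := norm_add_sq_real (a - b) ((1/Ld) • (S a - S b))
    have i1 : ⟪ a - b, (1/Ld) • (S a - S b) ⟫ = (1/Ld) * ⟪ S a - S b, a - b ⟫ := by
      rw [real_inner_smul_right, real_inner_comm]
    have i2 : ‖(1/Ld) • (S a - S b)‖^2 = (1/Ld)^2 * ‖S a - S b‖^2 := by
      rw [norm_smul, Real.norm_eq_abs, abs_of_nonneg (by positivity : (0:ℝ) ≤ 1/Ld), mul_pow]
    have hX : ⟪ S a - S b, a - b ⟫ ≤ -‖S a - S b‖^2/Ld := by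
      rw [le_div_iff₀ hLd0]
      have := hCC a b
      linarith [this]
    have hmul := mul_le_mul_of_nonneg_left hX (by positivity : (0:ℝ) ≤ 2*(1/Ld))
    have eE : 2*(1/Ld)*(-‖S a - S b‖^2/Ld) + (1/Ld)^2*‖S a - S b‖^2
        = -((1/Ld)^2*‖S a - S b‖^2) := by field_simp; ring
    have hsq : ‖(a - b) + (1/Ld) • (S a - S b)‖^2 ≤ ‖a - b‖^2 := by
      rw [h1, i1, i2]
      nlinarith [hmul, eE, sq_nonneg ‖S a - S b‖, sq_nonneg (1/Ld)]
    exact sq_le_imp'' (norm_nonneg _) (norm_nonneg _) hsq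
  -- gradient norm monotonicity
  have hGM : ∀ a, ‖S (a + (1/Ld) • S a)‖ ≤ ‖S a‖ := by
    intro a
    have hcc := hCC a (a + (1/Ld) • S a)
    have hv : a - (a + (1/Ld) • S a) = -((1/Ld) • S a) := by abel
    rw [hv] at hcc
    have i1 : ⟪ S a - S (a + (1/Ld) • S a), -((1/Ld) • S a) ⟫
        = -((1/Ld) * ⟪ S a - S (a + (1/Ld) • S a), S a ⟫) := by
      rw [inner_neg_right, real_inner_smul_right]
    rw [i1] at hcc
    have e1' : ∀ X : ℝ, Ld * -((1/Ld)*X) = -X := fun X => by field_simp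
    have e1 := e1' ⟪ S a - S (a + (1/Ld) • S a), S a ⟫
    have hge : ‖S a - S (a + (1/Ld) • S a)‖^2 ≤ ⟪ S a - S (a + (1/Ld) • S a), S a ⟫ := by
      linarith [hcc, e1]
    have h2 := norm_sub_sq_real (S a) (S a - S (a + (1/Ld) • S a))
    have hv2 : S a - (S a - S (a + (1/Ld) • S a)) = S (a + (1/Ld) • S a) := by abel
    rw [hv2] at h2
    have i2 : ⟪ S a, S a - S (a + (1/Ld) • S a) ⟫ = ⟪ S a - S (a + (1/Ld) • S a), S a ⟫ :=
      real_inner_comm _ _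
    have hsq : ‖S (a + (1/Ld) • S a)‖^2 ≤ ‖S a‖^2 := by
      rw [h2, i2]
      nlinarith [hge, sq_nonneg ‖S a - S (a + (1/Ld) • S a)‖]
    exact sq_le_imp'' (norm_nonneg _) (norm_nonneg _) hsq
  have hdxstar : d xstar = fstar := by rw [hXstar] at hxstar; exact hxstar
  have hDFGx' : ∀ j, 1 ≤ j → j ≤ k → x j = y j + (1/Ld) • S (y j) := by
    intro j h1 h2; rw [hDFGx j h1 h2, hSa]
  have hDG' : ∀ j, k ≤ j → j ≤ 2*k → x (j+1) = x j + (1/Ld) • S (x j) := by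
    intro j h1 h2; rw [hDG j h1 h2, hSa]
  have main := fista_main k hk d (fun z => f (uu z)) S x y θ Ld fstar Rd xstar hLd0 hA hK hP
    hNE hGM hW hdf hdxstar hθ1 hθrec hy1 hDFGx' hDFGy hDG' hRd
  obtain ⟨m1, m2⟩ := main
  constructor
  · have hneg : G (uu (x (2*k))) + g = -(S (x (2*k))) := by rw [hSa]; abel
    rw [hneg, norm_neg]
    exact m1
  · exact m2
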